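/- Every subdiagram of a 2-finite diagram is 2-finite. Equivalently, a diagram Γ is 2-infinite if and only if Γ contains a subdiagram which is minimal 2-infinite. -/

import Mathlib

open Finset

/-! A diagram on a vertex type `V` is encoded by a weight function `w : V → V → ℕ`:
`w i j` is the weight of the directed edge from `i` to `j` (`0` if there is no such
edge).  A genuine diagram is loopless and has at most one direction between any two
vertices, and the product of the weights along any cycle is a perfect square. -/

/-- No loops. -/
def DiagLoopless {V : Type*} (w : V → V → ℕ) : Prop := ∀ i, w i i = 0

/-- Between any two vertices there is at most one directed edge. -/
def DiagOneDir {V : Type*} (w : V → V → ℕ) : Prop := ∀ i j, w i j = 0 ∨ w j i = 0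

/-- The (undirected) weight of the edge between `i` and `j`. -/
def uw {V : Type*} (w : V → V → ℕ) (i j : V) : ℕ := w i j + w j i

/-- The product of the edge weights along any cycle (of length `≥ 3`) is a perfect
square. -/
def CycleSquare {V : Type*} (w : V → V → ℕ) : Prop :=
  ∀ (m : ℕ) (v : Fin (m + 3) → V), Function.Injective v →
    (∀ t, uw w (v t) (v (t + 1)) ≠ 0) →
    ∃ s : ℕ, (∏ t : Fin (m + 3), uw w (v t) (v (t + 1))) = s ^ 2

/-- Fomin–Zelevinsky diagram mutation at the vertex `k`.  Edges incident to `k` are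
reversed with their weights unchanged, and for every oriented two-edge path `i → k → j`
with weights `a`, `b`, the weight `c` of the edge between `i` and `j` is replaced by the
weight `c'` determined by `±√c ± √c' = √(ab)`, the sign before `√c` (resp. `√c'`) being
`+` exactly when `i,j,k` form an oriented cycle in `Γ` (resp. in `μ_k(Γ)`). -/
def mutate {V : Type*} [DecidableEq V] (w : V → V → ℕ) (k : V) : V → V → ℕ :=
  fun i j =>
    if i = j then 0
    else if j = k then w k i
    else if i = k then w j k
    else if w i k ≠ 0 ∧ w k j ≠ 0 then
      -- oriented two-edge path `i → k → j`
      let a := w i k; let b := w k j; let c := w i j + w j i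
      let s := Nat.sqrt (a * b * c)
      if w j i ≠ 0 then
        -- the triangle `i → k → j → i` is oriented in `Γ`: `c' = ab + c − 2√(abc)`,
        -- and the new edge goes from `i` to `j` exactly when `ab ≥ c`
        (if c ≤ a * b then a * b + c - 2 * s else 0)
      else
        -- non-oriented (or no) triangle: `c' = ab + c + 2√(abc)`, new edge `i → j`
        a * b + c + 2 * s
    else if w j k ≠ 0 ∧ w k i ≠ 0 then
      -- oriented two-edge path `j → k → i`: the new edge goes from `j` to `i`
      -- unless the triangle was oriented in `Γ` with `ab < c`
      let a := w j k; let b := w k i; let c := w i j + w j i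
      let s := Nat.sqrt (a * b * c)
      if w i j ≠ 0 ∧ a * b < c then a * b + c - 2 * s else 0
    else w i j

/-- Mutation equivalence of diagrams. -/
def MutEquiv {V : Type*} [DecidableEq V] (w w' : V → V → ℕ) : Prop :=
  Relation.ReflTransGen (fun x y => ∃ k, y = mutate x k) w w'

/-- A diagram is 2-finite if every mutation-equivalent diagram has all edge weights in
`{1,2,3}`. -/
def TwoFinite {V : Type*} [DecidableEq V] (w : V → V → ℕ) : Prop :=
  ∀ w', MutEquiv w w' → ∀ i j, w' i j ≤ 3

/-- The subdiagram induced on a subset `S` of the vertices. -/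
def restrictDiag {V : Type*} (w : V → V → ℕ) (S : Set V) : S → S → ℕ :=
  fun i j => w i j

/-- A diagram is minimal 2-infinite if it is 2-infinite and every proper induced
subdiagram is 2-finite. -/
def MinimalTwoInfinite {V : Type*} [DecidableEq V] (w : V → V → ℕ) : Prop :=
  ¬ TwoFinite w ∧ ∀ S : Set V, S ≠ Set.univ → TwoFinite (restrictDiag w S)

/-- The underlying undirected graph of a diagram. -/
def toGraph {V : Type*} (w : V → V → ℕ) : SimpleGraph V where
  Adj i j := i ≠ j ∧ uw w i j ≠ 0
  symm := by
    refine ⟨?_⟩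
    intro i j h
    refine ⟨h.1.symm, ?_⟩
    have h2 := h.2
    unfold uw at h2 ⊢
    omega
  loopless := by refine ⟨?_⟩; intro i h; exact h.1 rfl

/-- The mod-2 underlying graph of a diagram: `i ∼ j` iff the edge between them has odd
weight. -/
def toGraphMod2 {V : Type*} (w : V → V → ℕ) : SimpleGraph V where
  Adj i j := i ≠ j ∧ Odd (uw w i j)
  symm := by
    refine ⟨?_⟩
    intro i j h
    refine ⟨h.1.symm, ?_⟩
    have h2 := h.2
    unfold uw at h2 ⊢
    rwa [Nat.add_comm]
  loopless := by refine ⟨?_⟩; intro i h; exact h.1 rfl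

/-- The basic move `φ_{c,a}` on an undirected graph: the adjacency between `c` and each
neighbour `v ≠ c` of `a` is toggled, and all other edges are unchanged. -/
def basicMove {V : Type*} (G : SimpleGraph V) (c a : V) : SimpleGraph V where
  Adj u v := Xor' (G.Adj u v)
      ((u = c ∧ v ≠ c ∧ G.Adj a v) ∨ (v = c ∧ u ≠ c ∧ G.Adj a u))
  symm := by
    refine ⟨?_⟩
    intro u v h
    show Xor' (G.Adj v u) _
    rw [G.adj_comm v u]
    unfold Xor' at h ⊢
    unfold Xor at h ⊢
    tauto
  loopless := by
    refine ⟨?_⟩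
    intro u h
    unfold Xor' at h
    rcases h with ⟨h1, _⟩ | ⟨h1, _⟩
    · exact G.irrefl h1
    · rcases h1 with ⟨h2, h3, _⟩ | ⟨h2, h3, _⟩ <;> exact h3 h2

/-- One basic move applied to `G` (at a pair of adjacent vertices). -/
def BMStep {V : Type*} (G G' : SimpleGraph V) : Prop :=
  ∃ c a, G.Adj c a ∧ G' = basicMove G c a

/-- BM-equivalence: two graphs are related by a sequence of basic moves. -/
def BMEquiv {V : Type*} (G G' : SimpleGraph V) : Prop :=
  Relation.ReflTransGen BMStep G G'

/-- The path (type `A_n`) graph on `n` vertices. -/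
def dynA (n : ℕ) : SimpleGraph (Fin n) :=
  SimpleGraph.fromRel (fun i j => (i : ℕ) + 1 = (j : ℕ))

/-- The type `D_n` tree (`n ≥ 4`): a path `1 – 2 – ⋯ – (n−1)` with `0` attached to `2`. -/
def dynD (n : ℕ) : SimpleGraph (Fin n) :=
  SimpleGraph.fromRel (fun i j =>
    ((i : ℕ) = 0 ∧ (j : ℕ) = 2) ∨ ((i : ℕ) + 1 = (j : ℕ) ∧ 1 ≤ (i : ℕ)))

/-- The type `E_n` tree (`n ∈ {6,7,8}`): a path `0 – 1 – ⋯ – (n−2)` with `n−1` attached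
to `2`. -/
def dynE (n : ℕ) : SimpleGraph (Fin n) :=
  SimpleGraph.fromRel (fun i j =>
    ((i : ℕ) + 1 = (j : ℕ) ∧ (j : ℕ) ≤ n - 2) ∨ ((i : ℕ) = 2 ∧ (j : ℕ) = n - 1))

/-- `G` is (isomorphic to) a simply-laced Dynkin graph: type `A`, `D` or `E`. -/
def IsDynkinADE {V : Type*} (G : SimpleGraph V) : Prop :=
  (∃ n, 1 ≤ n ∧ Nonempty (G ≃g dynA n)) ∨
  (∃ n, 4 ≤ n ∧ Nonempty (G ≃g dynD n)) ∨
  (∃ n, (n = 6 ∨ n = 7 ∨ n = 8) ∧ Nonempty (G ≃g dynE n))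

/-- `v` enumerates an induced cycle (of length `m + 3`) in the diagram `w`. -/
def InducedCycleOn {V : Type*} (w : V → V → ℕ) {m : ℕ} (v : Fin (m + 3) → V) : Prop :=
  Function.Injective v ∧
    ∀ s t : Fin (m + 3), s ≠ t → (uw w (v s) (v t) ≠ 0 ↔ (t = s + 1 ∨ s = t + 1))

/-- The diagram contains a non-oriented (induced) cycle as a subdiagram. -/
def HasNonorientedCycle {V : Type*} (w : V → V → ℕ) : Prop :=
  ∃ (m : ℕ) (v : Fin (m + 3) → V), InducedCycleOn w v ∧
    ¬ ((∀ t, w (v t) (v (t + 1)) ≠ 0) ∨ (∀ t, w (v (t + 1)) (v t) ≠ 0))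

/-- Pull back a diagram along a map of vertex sets. -/
def pullDiag {U V : Type*} (f : U → V) (w : V → V → ℕ) : U → U → ℕ :=
  fun i j => w (f i) (f j)

lemma mutate_pullDiag {U V : Type*} [DecidableEq U] [DecidableEq V] (f : U → V)
    (hf : Function.Injective f) (w : V → V → ℕ) (k : U) :
    mutate (pullDiag f w) k = pullDiag f (mutate w (f k)) := by
  funext i j
  simp only [mutate, pullDiag, hf.eq_iff]
  congr

lemma mutEquiv_pullDiag {U V : Type*} [DecidableEq U] [DecidableEq V] (f : U → V)
    (hf : Function.Injective f) (w : V → V → ℕ) (w'' : U → U → ℕ)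
    (h : MutEquiv (pullDiag f w) w'') :
    ∃ w', MutEquiv w w' ∧ w'' = pullDiag f w' := by
  induction h with
  | refl => exact ⟨w, Relation.ReflTransGen.refl, rfl⟩
  | tail hab hbc ih =>
    obtain ⟨w', hw', rfl⟩ := ih
    obtain ⟨k, rfl⟩ := hbc
    exact ⟨mutate w' (f k), hw'.tail ⟨f k, rfl⟩, mutate_pullDiag f hf w' k⟩

lemma twoFinite_pullDiag {U V : Type*} [DecidableEq U] [DecidableEq V] (f : U → V)
    (hf : Function.Injective f) (w : V → V → ℕ) (h : TwoFinite w) :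
    TwoFinite (pullDiag f w) := by
  intro w'' hw'' i j
  obtain ⟨w', hw', rfl⟩ := mutEquiv_pullDiag f hf w w'' hw''
  exact h w' hw' (f i) (f j)

/-- Every subdiagram of a 2-finite diagram is 2-finite; equivalently, a diagram is
2-infinite iff it contains a minimal 2-infinite subdiagram. -/
theorem stmt10 {V : Type*} [Fintype V] [DecidableEq V] (w : V → V → ℕ)
    (hloop : DiagLoopless w) (hdir : DiagOneDir w) (hsq : CycleSquare w) :
    (TwoFinite w → ∀ S : Set V, TwoFinite (restrictDiag w S)) ∧
    (¬ TwoFinite w ↔ ∃ S : Set V, MinimalTwoInfinite (restrictDiag w S)) := by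
  classical
  have hrestrict : ∀ (w : V → V → ℕ), TwoFinite w → ∀ S : Set V,
      TwoFinite (restrictDiag w S) := by
    intro w hw S
    exact twoFinite_pullDiag (Subtype.val : S → V) Subtype.val_injective w hw
  refine ⟨hrestrict w, ?_, ?_⟩
  · -- forward: 2-infinite → minimal 2-infinite subdiagram
    intro h
    -- the restriction to univ is 2-infinite
    have huniv : ¬ TwoFinite (restrictDiag w (Set.univ : Set V)) := by
      intro hu
      apply h
      have : TwoFinite (pullDiag (fun v : V => (⟨v, trivial⟩ : (Set.univ : Set V)))
          (restrictDiag w Set.univ)) :=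
        twoFinite_pullDiag _ (fun a b hab => congrArg Subtype.val hab) _ hu
      exact this
    -- choose S of minimal cardinality with 2-infinite restriction
    have hex : ∃ n, ∃ S : Set V, S.ncard = n ∧ ¬ TwoFinite (restrictDiag w S) :=
      ⟨(Set.univ : Set V).ncard, Set.univ, rfl, huniv⟩
    obtain ⟨S, hScard, hSinf⟩ := Nat.find_spec hex
    have hmin : ∀ T : Set V, T.ncard < S.ncard → TwoFinite (restrictDiag w T) := by
      intro T hT
      by_contra hc
      exact Nat.find_min hex (by omega : T.ncard < Nat.find hex) ⟨T, rfl, hc⟩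
    refine ⟨S, hSinf, ?_⟩
    intro T hT
    -- T is a proper subset of S; its image in V is strictly smaller than S
    set S' : Set V := Subtype.val '' T with hS'
    have hg : Function.Injective (fun x : T => (⟨x.1.1, ⟨x.1, x.2, rfl⟩⟩ : S')) := by
      intro a b hab
      simp only [Subtype.mk.injEq] at hab
      exact Subtype.ext (Subtype.ext (congrArg (Subtype.val : S' → V) hab))
    have hlt : S'.ncard < S.ncard := by
      apply Set.ncard_lt_ncard _ (Set.toFinite S)
      constructor
      · rintro v ⟨x, _, rfl⟩; exact x.2
      · intro hsub
        apply hT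
        ext a
        simp only [Set.mem_univ, iff_true]
        have : (a : V) ∈ S' := hsub a.2
        obtain ⟨b, hb, hba⟩ := this
        rwa [show b = a from Subtype.ext hba] at hb
    have := twoFinite_pullDiag _ hg (restrictDiag w S') (hmin S' hlt)
    exact this
  · -- backward: minimal 2-infinite subdiagram → 2-infinite
    rintro ⟨S, hS⟩ hw
    exact hS.1 (hrestrict w hw S)
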